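/- Let [n_1, ..., n_l] and [m_1, ..., m_t] be Hirzebruch–Jung continued fractions (all entries ≥ 2) such that [n_1, ..., n_l, 1, m_1, ..., m_t] = 0. If [m_1, ..., m_t] = q/q_1 with 0 < q_1 < q and gcd(q, q_1) = 1, then [n_l, ..., n_1] = q/(q - q_1). -/

import Mathlib

/-- Hirzebruch–Jung continued fraction value: `hj [n₁, …, n_l] = n₁ - 1/(n₂ - 1/(⋯ - 1/n_l))`. -/
def hj : List ℤ → ℚ
  | [] => 0
  | [n] => (n : ℚ)
  | n :: l => (n : ℚ) - 1 / hj l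

lemma hj_cons (n : ℤ) (l : List ℤ) (hl : l ≠ []) :
    hj (n :: l) = (n : ℚ) - 1 / hj l := by
  cases l with
  | nil => simp at hl
  | cons a l => rfl

def Mhj (n : ℤ) : Matrix (Fin 2) (Fin 2) ℤ := !![n, -1; 1, 0]

def Phj (l : List ℤ) : Matrix (Fin 2) (Fin 2) ℤ := (l.map Mhj).prod

lemma Phj_nil : Phj [] = 1 := rfl
lemma Phj_cons (n : ℤ) (l : List ℤ) : Phj (n :: l) = Mhj n * Phj l := by
  simp [Phj]
lemma Phj_append (l t : List ℤ) : Phj (l ++ t) = Phj l * Phj t := by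
  simp [Phj]

lemma Phj_cons00 (n : ℤ) (l : List ℤ) :
    Phj (n :: l) 0 0 = n * Phj l 0 0 - Phj l 1 0 := by
  simp [Phj_cons, Mhj, Matrix.mul_apply, Fin.sum_univ_two]; ring
lemma Phj_cons01 (n : ℤ) (l : List ℤ) :
    Phj (n :: l) 0 1 = n * Phj l 0 1 - Phj l 1 1 := by
  simp [Phj_cons, Mhj, Matrix.mul_apply, Fin.sum_univ_two]; ring
lemma Phj_cons10 (n : ℤ) (l : List ℤ) :
    Phj (n :: l) 1 0 = Phj l 0 0 := by
  simp [Phj_cons, Mhj, Matrix.mul_apply, Fin.sum_univ_two]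
lemma Phj_cons11 (n : ℤ) (l : List ℤ) :
    Phj (n :: l) 1 1 = Phj l 0 1 := by
  simp [Phj_cons, Mhj, Matrix.mul_apply, Fin.sum_univ_two]

lemma Phj_reverse (l : List ℤ) :
    Phj l.reverse = !![Phj l 0 0, -(Phj l 1 0); -(Phj l 0 1), Phj l 1 1] := by
  induction l with
  | nil => simp [Phj_nil, Matrix.one_fin_two]
  | cons n l ih =>
    have h1 : Phj ((n :: l).reverse) = Phj l.reverse * Mhj n := by
      rw [List.reverse_cons, Phj_append]
      congr 1
      simp [Phj]
    rw [h1, ih]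
    rw [Phj_cons00, Phj_cons01, Phj_cons10, Phj_cons11]
    rw [Matrix.eta_fin_two (Phj l)] at *
    ext i j
    fin_cases i <;> fin_cases j <;> simp [Mhj, Matrix.mul_fin_two] <;> ring

lemma hj_eq (l : List ℤ) (hl : l ≠ []) (h2 : ∀ n ∈ l, 2 ≤ n) :
    1 ≤ Phj l 1 0 ∧ Phj l 1 0 < Phj l 0 0 ∧
      hj l = (Phj l 0 0 : ℚ) / (Phj l 1 0 : ℤ) := by
  induction l with
  | nil => simp at hl
  | cons n l ih =>
    rcases eq_or_ne l [] with rfl | hl'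
    · have hn := h2 n (by simp)
      have e00 : Phj [n] 0 0 = n := by
        rw [Phj_cons00]; simp [Phj_nil, Matrix.one_apply]
      have e10 : Phj [n] 1 0 = 1 := by
        rw [Phj_cons10]; simp [Phj_nil, Matrix.one_apply]
      refine ⟨by omega, by omega, ?_⟩
      rw [e00, e10]
      show (n : ℚ) = _
      simp
    · obtain ⟨hc, hca, hv⟩ := ih hl' (fun m hm => h2 m (by simp [hm]))
      have hn := h2 n (by simp)
      set a := Phj l 0 0 with ha
      set c := Phj l 1 0 with hcdef
      have hcq : (0:ℚ) < (c : ℚ) := by exact_mod_cast hc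
      have haq : (0:ℚ) < (a : ℚ) := by have : (0:ℤ) < a := by omega
                                       exact_mod_cast this
      refine ⟨?_, ?_, ?_⟩
      · rw [Phj_cons10]; omega
      · rw [Phj_cons00, Phj_cons10]; nlinarith
      · rw [hj_cons n l hl', hv, Phj_cons00, Phj_cons10, ← ha, ← hcdef]
        push_cast
        field_simp
        try ring

lemma hj_gt_one_of_nonpos (t : List ℤ) (ht : t ≠ []) (h0 : hj t ≤ 0) :
    ∀ l : List ℤ, l ≠ [] → (∀ n ∈ l, 2 ≤ n) → 1 < hj (l ++ t) := by
  intro l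
  induction l with
  | nil => intro h; simp at h
  | cons n l ih =>
    intro _ h2
    have hn := h2 n (by simp)
    have hnq : (2:ℚ) ≤ (n:ℚ) := by exact_mod_cast hn
    rcases eq_or_ne l [] with rfl | hl'
    · show 1 < hj (n :: t)
      rw [hj_cons n t ht]
      have : 1 / hj t ≤ 0 := by
        rcases h0.lt_or_eq with h | h
        · exact le_of_lt (one_div_neg.mpr h)
        · rw [h]; simp
      linarith
    · have hy := ih hl' (fun m hm => h2 m (by simp [hm]))
      have hne : l ++ t ≠ [] := by simp [ht]
      show 1 < hj (n :: (l ++ t))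
      rw [hj_cons n (l ++ t) hne]
      have h1 : 0 < 1 / hj (l ++ t) := by positivity
      have h2' : 1 / hj (l ++ t) < 1 := by
        rw [div_lt_one (by linarith)]; linarith
      linarith

lemma hj_append_eval (l : List ℤ) : ∀ t : List ℤ, t ≠ [] → hj t ≠ 0 →
    (∀ u v, l = u ++ v → u ≠ [] → hj (v ++ t) ≠ 0) →
    ((Phj l 1 0 : ℚ) * hj t + (Phj l 1 1 : ℤ) ≠ 0 ∧
      hj (l ++ t) = ((Phj l 0 0 : ℚ) * hj t + (Phj l 0 1 : ℤ)) /
        ((Phj l 1 0 : ℚ) * hj t + (Phj l 1 1 : ℤ))) := by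
  induction l with
  | nil =>
    intro t ht h0 _
    have e00 : Phj [] 0 0 = 1 := rfl
    have e01 : Phj [] 0 1 = 0 := rfl
    have e10 : Phj [] 1 0 = 0 := rfl
    have e11 : Phj [] 1 1 = 1 := rfl
    rw [e00, e01, e10, e11]
    simp
  | cons n l ih =>
    intro t ht h0 H
    have hlt : hj (l ++ t) ≠ 0 := by
      rcases eq_or_ne l [] with rfl | hl'
      · simpa using h0
      · exact H [n] l rfl (by simp)
    obtain ⟨hr, hy⟩ := ih t ht h0
      (fun u v huv hu => H (n :: u) v (by rw [huv]; rfl) (by simp))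
    set x := hj t with hx
    set a := Phj l 0 0
    set b := Phj l 0 1
    set c := Phj l 1 0
    set d := Phj l 1 1
    have hp : (a : ℚ) * x + (b : ℚ) ≠ 0 := by
      intro h
      apply hlt
      rw [hy, h, zero_div]
    have hne : l ++ t ≠ [] := by
      intro h
      exact ht (List.append_eq_nil_iff.mp h).2
    constructor
    · rw [Phj_cons10, Phj_cons11]
      exact hp
    · show hj (n :: (l ++ t)) = _
      rw [hj_cons n (l ++ t) hne, hy, Phj_cons00, Phj_cons01, Phj_cons10, Phj_cons11]
      rw [show Phj l 0 0 = a from rfl, show Phj l 0 1 = b from rfl, show Phj l 1 0 = c from rfl, show Phj l 1 1 = d from rfl]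
      push_cast
      field_simp
      ring

theorem stmt0 (ns ms : List ℤ) (hns : ns ≠ []) (hms : ms ≠ [])
    (hn2 : ∀ n ∈ ns, 2 ≤ n) (hm2 : ∀ m ∈ ms, 2 ≤ m)
    (hzero : hj (ns ++ 1 :: ms) = 0)
    (q q₁ : ℤ) (hq₁ : 0 < q₁) (hlt : q₁ < q) (hcop : Int.gcd q q₁ = 1)
    (hval : hj ms = (q : ℚ) / q₁) :
    hj ns.reverse = (q : ℚ) / (q - q₁) := by
  have hq : (0:ℤ) < q := lt_trans hq₁ hlt
  have hqQ : (q : ℚ) ≠ 0 := by exact_mod_cast hq.ne'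
  have hq₁Q : (q₁ : ℚ) ≠ 0 := by exact_mod_cast hq₁.ne'
  have hqq₁ : (0:ℚ) < (q : ℚ) - (q₁ : ℚ) := by
    have : (q₁:ℚ) < (q:ℚ) := by exact_mod_cast hlt
    linarith
  -- value of the tail 1 :: ms
  have hx : hj (1 :: ms) = ((q : ℚ) - q₁) / q := by
    rw [hj_cons 1 ms hms, hval]
    push_cast
    field_simp
  have hxne : hj (1 :: ms) ≠ 0 := by
    rw [hx]
    positivity
  -- every proper tail is nonzero
  have H : ∀ u v, ns = u ++ v → u ≠ [] → hj (v ++ (1 :: ms)) ≠ 0 := by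
    intro u v huv hu h0
    have h2u : ∀ n ∈ u, 2 ≤ n := fun n hn => hn2 n (by rw [huv]; simp [hn])
    have := hj_gt_one_of_nonpos (v ++ (1 :: ms)) (by simp) (le_of_eq h0) u hu h2u
    rw [← List.append_assoc, ← huv, hzero] at this
    norm_num at this
  obtain ⟨hden, heval⟩ := hj_append_eval ns (1 :: ms) (by simp) hxne H
  rw [hzero, hx] at heval
  have hnum : (Phj ns 0 0 : ℚ) * (((q : ℚ) - q₁) / q) + (Phj ns 0 1 : ℚ) = 0 := by
    rw [hx] at hden
    rcases div_eq_zero_iff.mp heval.symm with h | h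
    · exact h
    · exact absurd h hden
  -- key relation in ℚ
  have hrel : (Phj ns 0 0 : ℚ) * ((q : ℚ) - q₁) + (Phj ns 0 1 : ℚ) * q = 0 := by
    have := mul_eq_zero_of_left hnum (q : ℚ)
    field_simp at this ⊢
    linarith [this]
  -- evaluate the reversed fraction
  obtain ⟨hc, hca, hv⟩ := hj_eq ns.reverse (by simpa using hns)
    (fun n hn => hn2 n (List.mem_reverse.mp hn))
  rw [Phj_reverse ns] at hc hca hv
  norm_num [Matrix.cons_val_zero, Matrix.cons_val_one, Matrix.head_cons] at hc hca hv
  rw [hv]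
  have hbpos : (0:ℚ) < (-(Phj ns 0 1) : ℤ) := by exact_mod_cast lt_of_lt_of_le Int.zero_lt_one hc
  rw [div_eq_div_iff (by exact_mod_cast hbpos.ne') hqq₁.ne']
  push_cast at hbpos hrel ⊢
  linarith [hrel]
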